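/- Let n ≥ 1, let α ⊆ {1,…,n} be nonempty with m := |α|, let π be a permutation of α, and let B(α,π) and E(α) be the associated circuit matrix and diagonal matrix. Then there exist an n×n permutation matrix Q and an m×m permutation matrix P such that Qᵀ (E(α) − B(α,π)) Q equals the block-diagonal matrix with upper-left m×m block I_m − P and all remaining entries zero. -/

import Mathlib

open Matrix

/-- The circuit matrix `B(α, π)`: entries `1` if `i, j ∈ α` and `j = π i`, else `0`. -/
def circuitMatrix (n : ℕ) (α : Finset (Fin n)) (e : Equiv.Perm (Fin n)) :
    Matrix (Fin n) (Fin n) ℝ :=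
  Matrix.of fun i j => if i ∈ α ∧ j ∈ α ∧ j = e i then 1 else 0

/-- The diagonal 0–1 matrix `E(α)` with `E_{ii} = 1` exactly for `i ∈ α`. -/
def diagE (n : ℕ) (α : Finset (Fin n)) : Matrix (Fin n) (Fin n) ℝ :=
  Matrix.of fun i j => if i = j ∧ i ∈ α then 1 else 0

lemma perm_conj_entry {n : ℕ} (σ : Equiv.Perm (Fin n)) (M : Matrix (Fin n) (Fin n) ℝ) :
    (σ.permMatrix ℝ)ᵀ * M * σ.permMatrix ℝ = M.submatrix σ.symm σ.symm := by
  have h1 : (σ.permMatrix ℝ)ᵀ = (σ.symm.toPEquiv.toMatrix : Matrix (Fin n) (Fin n) ℝ) := by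
    rw [Equiv.toPEquiv_symm, PEquiv.toMatrix_symm]
  rw [show (σ.permMatrix ℝ) = (σ.toPEquiv.toMatrix : Matrix (Fin n) (Fin n) ℝ) from rfl,
    h1, PEquiv.toMatrix_toPEquiv_mul, PEquiv.mul_toMatrix_toPEquiv, Matrix.submatrix_submatrix]
  rfl

lemma permMatrix_apply' {k : ℕ} (p : Equiv.Perm (Fin k)) (a b : Fin k) :
    p.permMatrix ℝ a b = if b = p a then 1 else 0 := by
  simp [Equiv.Perm.permMatrix, PEquiv.toMatrix_apply, Equiv.toPEquiv_apply, eq_comm]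

/-- There are permutation matrices `Q` (of size `n`) and `P` (of size `m = |α|`) such
that `Qᵀ (E(α) − B(α,π)) Q` is block diagonal with upper-left `m × m` block `I_m − P`
and all remaining entries zero. -/
theorem circuit_matrix_block_form (n : ℕ) (hn : 1 ≤ n)
    (α : Finset (Fin n)) (hα : α.Nonempty)
    (e : Equiv.Perm (Fin n)) (he : ∀ i, i ∈ α ↔ e i ∈ α) :
    ∃ (q : Equiv.Perm (Fin n)) (p : Equiv.Perm (Fin α.card)),
      (q.permMatrix ℝ)ᵀ * (diagE n α - circuitMatrix n α e) * (q.permMatrix ℝ) =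
        Matrix.of (fun i j : Fin n =>
          if hi : (i : ℕ) < α.card then
            if hj : (j : ℕ) < α.card then
              ((1 : Matrix (Fin α.card) (Fin α.card) ℝ) - p.permMatrix ℝ) ⟨i, hi⟩ ⟨j, hj⟩
            else 0
          else 0) := by
  classical
  set m := α.card with hm
  have hcard : α.card + αᶜ.card = n := by
    simpa using α.card_add_card_compl
  let oi : Fin α.card ≃o ↥α := α.orderIsoOfFin rfl
  let oc : Fin αᶜ.card ≃o ↥(αᶜ) := (αᶜ).orderIsoOfFin rfl
  let eco : {x : Fin n // ¬ x ∈ α} ≃ ↥(αᶜ) :=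
    Equiv.subtypeEquivRight (fun x => (Finset.mem_compl).symm)
  let σ : Equiv.Perm (Fin n) :=
    ((Equiv.sumCompl (· ∈ α)).symm.trans
      ((oi.toEquiv.symm.sumCongr (eco.trans oc.toEquiv.symm)).trans
        (finSumFinEquiv.trans (finCongr hcard))))
  -- membership characterization
  have hmemlt : ∀ a : Fin n, a ∈ α ↔ ((σ a : Fin n) : ℕ) < m := by
    intro a
    by_cases h : a ∈ α
    · simp [σ, Equiv.sumCompl_symm_apply_of_pos h, h, Fin.is_lt, hm]
    · simp [σ, Equiv.sumCompl_symm_apply_of_neg h, h, hm]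
  -- computation on α
  have hσoi : ∀ k : Fin m, σ ((oi k : Fin n)) = ⟨(k : ℕ), lt_of_lt_of_le k.is_lt (by omega)⟩ := by
    intro k
    have hk : (oi k : Fin n) ∈ α := (oi k).2
    apply Fin.ext
    simp [σ, Equiv.sumCompl_symm_apply_of_pos hk]
  have hσsymm : ∀ (i : Fin n) (hi : (i : ℕ) < m), σ.symm i = (oi ⟨(i : ℕ), hi⟩ : Fin n) := by
    intro i hi
    rw [Equiv.symm_apply_eq, hσoi]
  have hσsymm_not : ∀ (i : Fin n), ¬ (i : ℕ) < m → σ.symm i ∉ α := by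
    intro i hi h
    rw [hmemlt, Equiv.apply_symm_apply] at h
    exact hi h
  let p : Equiv.Perm (Fin m) :=
    oi.toEquiv.trans ((e.subtypePerm (fun i => (he i).symm)).trans oi.toEquiv.symm)
  refine ⟨σ, p, ?_⟩
  rw [perm_conj_entry]
  ext i j
  simp only [Matrix.submatrix_apply, Matrix.of_apply, Matrix.sub_apply, diagE, circuitMatrix]
  by_cases hi : (i : ℕ) < m
  · by_cases hj : (j : ℕ) < m
    · rw [dif_pos hi, dif_pos hj, hσsymm i hi, hσsymm j hj]
      have hx : (oi ⟨(i : ℕ), hi⟩ : Fin n) ∈ α := (oi ⟨(i : ℕ), hi⟩).2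
      have hy : (oi ⟨(j : ℕ), hj⟩ : Fin n) ∈ α := (oi ⟨(j : ℕ), hj⟩).2
      have heq1 : ((oi ⟨(i : ℕ), hi⟩ : Fin n) = (oi ⟨(j : ℕ), hj⟩ : Fin n)) ↔
          (⟨(i : ℕ), hi⟩ : Fin m) = ⟨(j : ℕ), hj⟩ := by
        rw [← Subtype.ext_iff]
        exact oi.toEquiv.apply_eq_iff_eq
      have heq2 : ((oi ⟨(j : ℕ), hj⟩ : Fin n) = e (oi ⟨(i : ℕ), hi⟩ : Fin n)) ↔
          (⟨(j : ℕ), hj⟩ : Fin m) = p ⟨(i : ℕ), hi⟩ := by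
        have hp : p (⟨(i : ℕ), hi⟩ : Fin m) =
            oi.toEquiv.symm ⟨e ((oi ⟨(i : ℕ), hi⟩ : Fin n)), (he _).mp hx⟩ := rfl
        rw [hp, Equiv.eq_symm_apply, Subtype.ext_iff]
        exact Iff.rfl
      rw [Matrix.one_apply, permMatrix_apply']
      have c1 : ((oi ⟨(i : ℕ), hi⟩ : Fin n) = (oi ⟨(j : ℕ), hj⟩ : Fin n) ∧
          (oi ⟨(i : ℕ), hi⟩ : Fin n) ∈ α) ↔ (⟨(i : ℕ), hi⟩ : Fin m) = ⟨(j : ℕ), hj⟩ := by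
        constructor
        · exact fun h => heq1.mp h.1
        · exact fun h => ⟨heq1.mpr h, hx⟩
      have c2 : ((oi ⟨(i : ℕ), hi⟩ : Fin n) ∈ α ∧ (oi ⟨(j : ℕ), hj⟩ : Fin n) ∈ α ∧
          (oi ⟨(j : ℕ), hj⟩ : Fin n) = e (oi ⟨(i : ℕ), hi⟩ : Fin n)) ↔
          (⟨(j : ℕ), hj⟩ : Fin m) = p ⟨(i : ℕ), hi⟩ := by
        constructor
        · exact fun h => heq2.mp h.2.2
        · exact fun h => ⟨hx, hy, heq2.mpr h⟩
      exact congrArg₂ (· - ·) (if_congr c1 rfl rfl) (if_congr c2 rfl rfl)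
    · rw [dif_pos hi, dif_neg hj]
      have h := hσsymm_not j hj
      have h1 : ¬ (σ.symm i = σ.symm j ∧ σ.symm i ∈ α) := by
        rintro ⟨h1, h2⟩; rw [h1] at h2; exact h h2
      have h2 : ¬ (σ.symm i ∈ α ∧ σ.symm j ∈ α ∧ σ.symm j = e (σ.symm i)) := by
        rintro ⟨_, h2, _⟩; exact h h2
      rw [if_neg h1, if_neg h2]; ring
  · rw [dif_neg hi]
    have h := hσsymm_not i hi
    have h1 : ¬ (σ.symm i = σ.symm j ∧ σ.symm i ∈ α) := by
      rintro ⟨_, h2⟩; exact h h2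
    have h2 : ¬ (σ.symm i ∈ α ∧ σ.symm j ∈ α ∧ σ.symm j = e (σ.symm i)) := by
      rintro ⟨h2, _, _⟩; exact h h2
    rw [if_neg h1, if_neg h2]; ring
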